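/- For a prime p, α > 0, integer r, and t, t' > 0, the heat kernel satisfies the semigroup property: (Z_r(·,t) ∗ Z_r(·,t'))(x) = Z_r(x, t+t') for all x ∈ ℚ_p, where ∗ denotes convolution with respect to Haar measure on ℚ_p. -/

import Mathlib

open MeasureTheory Filter Topology

noncomputable section

variable (p : ℕ) [Fact p.Prime]

instance : MeasurableSpace ℚ_[p] := borel _
instance : BorelSpace ℚ_[p] := ⟨rfl⟩

/-- The closed unit ball of `ℚ_[p]` (i.e. `ℤ_p`) as a positive compact set. -/
def padicUnitBall : TopologicalSpace.PositiveCompacts ℚ_[p] where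
  carrier := Metric.closedBall 0 1
  isCompact' := isCompact_closedBall 0 1
  interior_nonempty' := ⟨0, mem_interior_iff_mem_nhds.2 (Metric.closedBall_mem_nhds 0 one_pos)⟩

/-- Haar measure on `ℚ_[p]` normalized so that `ℤ_p` has measure 1. -/
def μp : Measure ℚ_[p] := Measure.addHaarMeasure (padicUnitBall p)

/-- The heat kernel `Z_r(x,t) = ∫ χ(-xξ) e^{-t(⟨ξ⟩^α - p^{rα})} dξ`, where
`⟨ξ⟩ = max(|ξ|_p, p^r)`. -/
def heatKernel (χ : AddChar ℚ_[p] ℂ) (r : ℤ) (α t : ℝ) (x : ℚ_[p]) : ℂ :=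
  ∫ ξ, χ (-(x*ξ)) *
    Complex.exp (-((t * ((max ‖ξ‖ ((p:ℝ)^r)) ^ α - (p:ℝ) ^ ((r:ℝ)*α)) : ℝ) : ℂ)) ∂(μp p)

/-- The kernel `K_α(y)`, supported on the ball `|y|_p ≤ p^{-r}`. -/
def Kfun (r : ℤ) (α : ℝ) (y : ℚ_[p]) : ℝ :=
  if ‖y‖ ≤ (p:ℝ)^(-r) then
    (1 - (p:ℝ)^α)/(1 - (p:ℝ)^(-α-1)) * ‖y‖ ^ (-α-1)
      + (p:ℝ)^((r:ℝ)*(α+1)) * (1 - (p:ℝ)^α)/(1 - (p:ℝ)^(α+1))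
  else 0

/-- `u(x,t) = ∫_{|ξ|_p ≤ 1} χ(-xξ) e^{-t(⟨ξ⟩^α - p^{rα})} dξ`, the solution with initial
datum the indicator of the unit ball. -/
def uball (χ : AddChar ℚ_[p] ℂ) (r : ℤ) (α t : ℝ) (x : ℚ_[p]) : ℂ :=
  ∫ ξ in {ξ : ℚ_[p] | ‖ξ‖ ≤ 1}, χ (-(x*ξ)) *
    Complex.exp (-((t * ((max ‖ξ‖ ((p:ℝ)^r)) ^ α - (p:ℝ) ^ ((r:ℝ)*α)) : ℝ) : ℂ)) ∂(μp p)

/-- The survival probability `S(t) = ∫_{|x|_p ≤ 1} u(x,t) dx`. -/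
def Sfun (χ : AddChar ℚ_[p] ℂ) (r : ℤ) (α t : ℝ) : ℂ :=
  ∫ x in {x : ℚ_[p] | ‖x‖ ≤ 1}, uball p χ r α t x ∂(μp p)

/-- The solution `u(x,t) = (Z_r(·,t) ∗ φ)(x)` of the Cauchy problem, with `u(x,0) = φ(x)`. -/
def sol (χ : AddChar ℚ_[p] ℂ) (r : ℤ) (α : ℝ) (φ : ℚ_[p] → ℂ) (t : ℝ) (x : ℚ_[p]) : ℂ :=
  if t = 0 then φ x else ∫ y, heatKernel p χ r α t (x-y) * φ y ∂(μp p)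

/-- The pseudodifferential operator `H^α` with symbol `⟨ξ⟩^α - p^{rα}`:
`H^α g = 𝓕⁻¹[(⟨ξ⟩^α - p^{rα}) 𝓕g]`. -/
def Hop (χ : AddChar ℚ_[p] ℂ) (r : ℤ) (α : ℝ) (g : ℚ_[p] → ℂ) (x : ℚ_[p]) : ℂ :=
  ∫ ξ, χ (-(x*ξ)) * (((max ‖ξ‖ ((p:ℝ)^r)) ^ α - (p:ℝ)^((r:ℝ)*α) : ℝ) : ℂ) *
    (∫ y, χ (ξ*y) * g y ∂(μp p)) ∂(μp p)

/-- The Laplace transform `G_r(s)` of the density `g(t)`. -/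
def Gr (χ : AddChar ℚ_[p] ℂ) (r : ℤ) (α : ℝ) (s : ℝ) : ℂ :=
  ∫ y in {y : ℚ_[p] | 1 < ‖y‖ ∧ ‖y‖ ≤ (p:ℝ)^(-r)}, (Kfun p r α y : ℂ) *
    ∫ ξ in {ξ : ℚ_[p] | ‖ξ‖ ≤ 1},
      χ (-(ξ*y)) / ((s:ℂ) + (((max ‖ξ‖ ((p:ℝ)^r)) ^ α - (p:ℝ)^((r:ℝ)*α) : ℝ) : ℂ)) ∂(μp p) ∂(μp p)


namespace Stmt4
open scoped ENNReal

instance : (μp p).IsAddHaarMeasure := Measure.isAddHaarMeasure_addHaarMeasure _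

variable {p}

lemma pP : p.Prime := Fact.out

lemma hp1R : (1:ℝ) < p := by exact_mod_cast pP.one_lt

lemma hp0R : (0:ℝ) < p := lt_trans one_pos hp1R

lemma hpQ : (p : ℚ_[p]) ≠ 0 := Nat.cast_ne_zero.2 pP.ne_zero

/-- the ball of radius `p^n`. -/
def Bm (p : ℕ) [Fact p.Prime] (n : ℤ) : Set ℚ_[p] := Metric.closedBall 0 ((p:ℝ)^n)

lemma mem_Bm {n : ℤ} {x : ℚ_[p]} : x ∈ Bm p n ↔ ‖x‖ ≤ (p:ℝ)^n := by
  simp [Bm, Metric.mem_closedBall, dist_eq_norm]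

lemma measurableSet_Bm (n : ℤ) : MeasurableSet (Bm p n) :=
  measurableSet_closedBall

lemma norm_zpow_p (n : ℤ) : ‖(p:ℚ_[p])^n‖ = (p:ℝ)^(-n) := by
  rw [norm_zpow, Padic.norm_p, ← zpow_neg_one, ← zpow_mul]
  ring_nf

lemma Bm_succ_eq (n : ℤ) :
    Bm p (n+1) = ⋃ i : Fin p, (fun y => y - ((i:ℕ):ℚ_[p]) * (p:ℚ_[p])^(-(n+1))) ⁻¹' Bm p n := by
  ext y
  simp only [Set.mem_iUnion, Set.mem_preimage, mem_Bm]
  constructor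
  · intro hy
    have hw : ‖y * (p:ℚ_[p])^(n+1)‖ ≤ 1 := by
      rw [norm_mul, norm_zpow_p]
      calc ‖y‖ * (p:ℝ)^(-(n+1)) ≤ (p:ℝ)^(n+1) * (p:ℝ)^(-(n+1)) := by
            apply mul_le_mul_of_nonneg_right hy (zpow_nonneg hp0R.le _)
        _ = 1 := by
            rw [← zpow_add₀ (ne_of_gt hp0R)]
            have h4 : n + 1 + -(n+1) = 0 := by ring
            rw [h4, zpow_zero]
    set W : ℤ_[p] := ⟨y * (p:ℚ_[p])^(n+1), hw⟩ with hW
    refine ⟨⟨W.appr 1, by simpa using W.appr_lt 1⟩, ?_⟩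
    have hspec : ‖W - (W.appr 1 : ℤ_[p])‖ ≤ (p:ℝ)^(-(1:ℕ):ℤ) :=
      (PadicInt.norm_le_pow_iff_mem_span_pow _ 1).2 (by simpa using W.appr_spec 1)
    have hcoe : ‖((W : ℚ_[p]) - ((W.appr 1 : ℕ) : ℚ_[p]))‖ ≤ (p:ℝ)^(-1:ℤ) := by
      have h2 : ((W - (W.appr 1 : ℤ_[p]) : ℤ_[p]) : ℚ_[p]) = (W : ℚ_[p]) - ((W.appr 1 : ℕ) : ℚ_[p]) := by
        push_cast; ring
      rw [← h2, PadicInt.padic_norm_e_of_padicInt]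
      exact_mod_cast hspec
    have hWc : (W : ℚ_[p]) = y * (p:ℚ_[p])^(n+1) := rfl
    have hyw : y - ((W.appr 1 : ℕ) : ℚ_[p]) * (p:ℚ_[p])^(-(n+1))
        = ((W : ℚ_[p]) - ((W.appr 1 : ℕ) : ℚ_[p])) * (p:ℚ_[p])^(-(n+1)) := by
      rw [hWc, sub_mul, mul_assoc, ← zpow_add₀ hpQ]
      have h4 : n + 1 + -(n+1) = 0 := by ring
      rw [h4, zpow_zero, mul_one]
    rw [hyw, norm_mul, norm_zpow_p, neg_neg]
    calc ‖(W : ℚ_[p]) - ((W.appr 1 : ℕ) : ℚ_[p])‖ * (p:ℝ)^(n+1)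
        ≤ (p:ℝ)^(-1:ℤ) * (p:ℝ)^(n+1) := by
          apply mul_le_mul_of_nonneg_right hcoe (zpow_nonneg hp0R.le _)
      _ = (p:ℝ)^n := by rw [← zpow_add₀ (ne_of_gt hp0R)]; ring_nf
  · rintro ⟨i, hi⟩
    have hci : ‖((i:ℕ):ℚ_[p]) * (p:ℚ_[p])^(-(n+1))‖ ≤ (p:ℝ)^(n+1) := by
      rw [norm_mul, norm_zpow_p, neg_neg]
      have h1 : ‖((i:ℕ):ℚ_[p])‖ ≤ 1 := by
        have h5 : ((((i:ℕ):ℤ)) : ℚ_[p]) = ((i:ℕ):ℚ_[p]) := by push_cast; rfl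
        have h6 := Padic.norm_int_le_one (p := p) ((i:ℕ):ℤ)
        rwa [h5] at h6
      nlinarith [zpow_pos (hp0R (p := p)) (n+1)]
    have h3 := Padic.nonarchimedean (y - ((i:ℕ):ℚ_[p]) * (p:ℚ_[p])^(-(n+1)))
      (((i:ℕ):ℚ_[p]) * (p:ℚ_[p])^(-(n+1)))
    simp only [sub_add_cancel] at h3
    refine le_trans h3 (max_le (le_trans hi ?_) hci)
    exact zpow_le_zpow_right₀ hp1R.le (by omega)

lemma Bm_disjoint (n : ℤ) : Pairwise (Function.onFun Disjoint
    (fun i : Fin p => (fun y => y - ((i:ℕ):ℚ_[p]) * (p:ℚ_[p])^(-(n+1))) ⁻¹' Bm p n)) := by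
  intro i j hij
  rw [Function.onFun, Set.disjoint_left]
  intro y hyi hyj
  rw [Set.mem_preimage, mem_Bm] at hyi hyj
  have hd : ‖(((j:ℕ):ℚ_[p]) - ((i:ℕ):ℚ_[p])) * (p:ℚ_[p])^(-(n+1))‖ ≤ (p:ℝ)^n := by
    have h0 : (((j:ℕ):ℚ_[p]) - ((i:ℕ):ℚ_[p])) * (p:ℚ_[p])^(-(n+1))
        = (y - ((i:ℕ):ℚ_[p]) * (p:ℚ_[p])^(-(n+1))) + -(y - ((j:ℕ):ℚ_[p]) * (p:ℚ_[p])^(-(n+1))) := by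
      ring
    rw [h0]
    refine le_trans (Padic.nonarchimedean _ _) (max_le hyi ?_)
    rwa [norm_neg]
  rw [norm_mul, norm_zpow_p, neg_neg] at hd
  have hlt : ‖(((j:ℤ) - (i:ℤ) : ℤ) : ℚ_[p])‖ < 1 := by
    have h1 : ((((j:ℤ) - (i:ℤ) : ℤ)) : ℚ_[p]) = ((j:ℕ):ℚ_[p]) - ((i:ℕ):ℚ_[p]) := by push_cast; ring
    rw [h1]
    have hp1 : (p:ℝ)^n < (p:ℝ)^(n+1) := by
      apply zpow_lt_zpow_right₀ (hp1R (p := p)) (by omega)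
    have hpos : (0:ℝ) < (p:ℝ)^(n+1) := zpow_pos (hp0R (p := p)) _
    nlinarith
  rw [Padic.norm_intCast_lt_one_iff] at hlt
  have habs : |(j:ℤ) - (i:ℤ)| < (p:ℤ) := by
    have hi2 := i.2; have hj2 := j.2
    rcases abs_cases ((j:ℤ) - (i:ℤ)) with ⟨h,_⟩|⟨h,_⟩ <;> omega
  have := Int.eq_zero_of_abs_lt_dvd hlt habs
  exact hij (Fin.ext (by omega)).symm

lemma vol_Bm_succ (n : ℤ) : μp p (Bm p (n+1)) = (p : ℝ≥0∞) * μp p (Bm p n) := by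
  rw [Bm_succ_eq, measure_iUnion (Bm_disjoint n) (fun i => (measurableSet_Bm n).preimage (by fun_prop))]
  have h1 : ∀ i : Fin p, μp p ((fun y => y - ((i:ℕ):ℚ_[p]) * (p:ℚ_[p])^(-(n+1))) ⁻¹' Bm p n)
      = μp p (Bm p n) := by
    intro i
    have h2 : (fun y : ℚ_[p] => y - ((i:ℕ):ℚ_[p]) * (p:ℚ_[p])^(-(n+1)))
        = (fun y : ℚ_[p] => y + (-(((i:ℕ):ℚ_[p]) * (p:ℚ_[p])^(-(n+1))))) := by
      funext y; ring
    rw [h2, measure_preimage_add_right]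
  simp only [h1, tsum_fintype, Finset.sum_const, Finset.card_univ, Fintype.card_fin, nsmul_eq_mul]

lemma vol_Bm (n : ℤ) : μp p (Bm p n) = ENNReal.ofReal ((p:ℝ)^n) := by
  have hfin : ∀ m : ℤ, μp p (Bm p m) ≠ ⊤ :=
    fun m => (IsCompact.measure_lt_top (isCompact_closedBall _ _)).ne
  have hbase : μp p (Bm p 0) = 1 := by
    have : Bm p 0 = (padicUnitBall p : Set ℚ_[p]) := by
      simp [Bm, padicUnitBall]; rfl
    rw [this]
    exact Measure.addHaarMeasure_self
  have hcoe : (p : ℝ≥0∞) = ENNReal.ofReal (p:ℝ) := by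
    simp [ENNReal.ofReal_natCast]
  induction n using Int.induction_on with
  | zero => simpa using hbase
  | succ k ih =>
      rw [vol_Bm_succ, ih, hcoe, ← ENNReal.ofReal_mul (hp0R (p := p)).le]
      congr 1
      rw [zpow_add₀ (ne_of_gt (hp0R (p := p))), zpow_one]
      ring
  | pred k ih =>
      have h1 : μp p (Bm p (-(k:ℤ))) = (p:ℝ≥0∞) * μp p (Bm p (-(k:ℤ)-1)) := by
        have := vol_Bm_succ (p := p) (-(k:ℤ)-1)
        simpa using this
      rw [h1] at ih
      have hinj := (ENNReal.mul_left_strictMono (a := (p:ℝ≥0∞))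
        (by exact_mod_cast pP.ne_zero) (by simp)).injective
      apply hinj
      beta_reduce
      rw [mul_comm _ (p:ℝ≥0∞), mul_comm _ (p:ℝ≥0∞)]
      rw [ih, hcoe, ← ENNReal.ofReal_mul (hp0R (p := p)).le]
      congr 1
      rw [show (-(k:ℤ)-1) = (-(k:ℤ)) + (-1) by ring, zpow_add₀ (ne_of_gt (hp0R (p := p)))]
      have hne : (p:ℝ) ≠ 0 := ne_of_gt (hp0R (p := p))
      field_simp

lemma vol_Bm_real (n : ℤ) : (μp p (Bm p n)).toReal = (p:ℝ)^n := by
  rw [vol_Bm, ENNReal.toReal_ofReal (zpow_nonneg (hp0R (p := p)).le n)]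

lemma vol_ball_translate (c : ℚ_[p]) (n : ℤ) :
    μp p (Metric.closedBall c ((p:ℝ)^n)) = μp p (Bm p n) := by
  have h1 : Metric.closedBall c ((p:ℝ)^n) = (fun y => y + (-c)) ⁻¹' Bm p n := by
    ext y; simp [Bm, Metric.mem_closedBall, dist_eq_norm, sub_eq_add_neg]
  rw [h1, measure_preimage_add_right]

variable {χ : AddChar ℚ_[p] ℂ}

lemma char_norm (hχ : ∀ y : ℚ_[p], χ y = 1 ↔ ‖y‖ ≤ 1) (y : ℚ_[p]) : ‖χ y‖ = 1 := by
  obtain ⟨k, hk⟩ : ∃ k : ℕ, ‖y‖ ≤ (p:ℝ)^k := by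
    obtain ⟨k, hk⟩ := pow_unbounded_of_one_lt ‖y‖ (hp1R (p := p))
    exact ⟨k, hk.le⟩
  have h1 : χ (((p^k : ℕ) : ℚ_[p]) * y) = 1 := by
    apply (hχ _).2
    rw [norm_mul]
    have h2 : ‖((p^k : ℕ) : ℚ_[p])‖ = ((p:ℝ)^k)⁻¹ := by
      push_cast
      rw [norm_pow, Padic.norm_p, inv_pow]
    rw [h2]
    have h3 : (0:ℝ) < (p:ℝ)^k := pow_pos (hp0R (p := p)) k
    rw [inv_mul_le_iff₀ h3]
    linarith
  have h4 : χ (((p^k : ℕ) : ℚ_[p]) * y) = (χ y)^(p^k) := by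
    rw [show ((p^k : ℕ) : ℚ_[p]) * y = (p^k : ℕ) • y by rw [nsmul_eq_mul]]
    exact AddChar.map_nsmul_eq_pow χ _ _
  have h5 : ‖χ y‖ ^ (p^k) = 1 := by
    rw [← norm_pow, ← h4, h1, norm_one]
  have hne : p^k ≠ 0 := pow_ne_zero _ pP.ne_zero
  by_contra hne1
  rcases lt_or_gt_of_ne hne1 with h|h
  · have := pow_lt_one₀ (norm_nonneg (χ y)) h hne
    rw [h5] at this; exact lt_irrefl _ this
  · have := one_lt_pow₀ h hne
    rw [h5] at this; exact lt_irrefl _ this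

lemma char_cont (hχ : ∀ y : ℚ_[p], χ y = 1 ↔ ‖y‖ ≤ 1) : Continuous χ := by
  rw [continuous_iff_continuousAt]
  intro a
  have h1 : Set.EqOn χ (fun _ => χ a) (Metric.closedBall a 1) := by
    intro ξ hξ
    have h2 : χ ξ = χ a * χ (ξ - a) := by
      rw [← AddChar.map_add_eq_mul]; congr 1; ring
    rw [Metric.mem_closedBall, dist_eq_norm] at hξ
    rw [h2, (hχ _).2 hξ, mul_one]
  have h3 : χ =ᶠ[nhds a] (fun _ => χ a) :=
    Filter.eventuallyEq_of_mem (Metric.closedBall_mem_nhds a one_pos) h1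
  exact ContinuousAt.congr continuousAt_const h3.symm

lemma char_ball (hχ : ∀ y : ℚ_[p], χ y = 1 ↔ ‖y‖ ≤ 1) (x : ℚ_[p]) (n : ℤ) :
    (∫ ξ in Bm p n, χ (-(x*ξ)) ∂(μp p))
      = if ‖x‖ ≤ (p:ℝ)^(-n) then (((p:ℝ)^n : ℝ) : ℂ) else 0 := by
  split_ifs with hx
  · rw [setIntegral_congr_fun (measurableSet_Bm n) (g := fun _ => (1:ℂ)) ?_]
    · rw [setIntegral_const, measureReal_def, vol_Bm, ENNReal.toReal_ofReal (zpow_nonneg (hp0R (p := p)).le n)]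
      simp [Complex.real_smul]
    · intro ξ hξ
      rw [mem_Bm] at hξ
      apply (hχ _).2
      rw [norm_neg, norm_mul]
      calc ‖x‖ * ‖ξ‖ ≤ (p:ℝ)^(-n) * (p:ℝ)^n := by
            apply mul_le_mul hx hξ (norm_nonneg _) (zpow_nonneg (hp0R (p := p)).le _)
        _ = 1 := by rw [← zpow_add₀ (ne_of_gt (hp0R (p := p)))]; simp
  · push_neg at hx
    set u : ℚ_[p] := (p:ℚ_[p])^(-n) with hu_def
    have hu : ‖u‖ = (p:ℝ)^n := by rw [hu_def, norm_zpow_p, neg_neg]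
    have hcne : χ (-(x*u)) ≠ 1 := by
      intro hc
      have h6 := (hχ _).1 hc
      rw [norm_neg, norm_mul, hu] at h6
      have h7 : (p:ℝ)^(-n) * (p:ℝ)^n = 1 := by
        rw [← zpow_add₀ (ne_of_gt (hp0R (p := p)))]; simp
      nlinarith [zpow_pos (hp0R (p := p)) n, zpow_pos (hp0R (p := p)) (-n)]
    have hshift : ∀ ξ, (Bm p n).indicator (fun ξ => χ (-(x*ξ))) (ξ + u)
        = χ (-(x*u)) * (Bm p n).indicator (fun ξ => χ (-(x*ξ))) ξ := by
      intro ξ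
      have hmem : ξ + u ∈ Bm p n ↔ ξ ∈ Bm p n := by
        rw [mem_Bm, mem_Bm]
        constructor
        · intro h
          have h8 := Padic.nonarchimedean (ξ + u) (-u)
          simp only [add_neg_cancel_right, norm_neg] at h8
          exact le_trans h8 (max_le h (le_of_eq hu))
        · intro h
          exact le_trans (Padic.nonarchimedean ξ u) (max_le h (le_of_eq hu))
      by_cases hξ : ξ ∈ Bm p n
      · rw [Set.indicator_of_mem (hmem.2 hξ), Set.indicator_of_mem hξ,
          ← AddChar.map_add_eq_mul]
        congr 1; ring
      · rw [Set.indicator_of_notMem (fun h => hξ (hmem.1 h)), Set.indicator_of_notMem hξ,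
          mul_zero]
    have key : (∫ ξ in Bm p n, χ (-(x*ξ)) ∂(μp p))
        = χ (-(x*u)) * ∫ ξ in Bm p n, χ (-(x*ξ)) ∂(μp p) := by
      conv_lhs => rw [← integral_indicator (measurableSet_Bm n),
        ← integral_add_right_eq_self ((Bm p n).indicator (fun ξ => χ (-(x*ξ)))) u]
      simp_rw [hshift]
      rw [integral_const_mul, integral_indicator (measurableSet_Bm n)]
    have h0 : (1 - χ (-(x*u))) * (∫ ξ in Bm p n, χ (-(x*ξ)) ∂(μp p)) = 0 := by
      linear_combination key
    rcases mul_eq_zero.1 h0 with h|h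
    · exact absurd (sub_eq_zero.1 h).symm hcne
    · exact h

/-- the radial symbol `e^{-t(⟨ξ⟩^α - p^{rα})}`. -/
def gker (p : ℕ) [Fact p.Prime] (r : ℤ) (α t : ℝ) (ξ : ℚ_[p]) : ℝ :=
  Real.exp (-(t * ((max ‖ξ‖ ((p:ℝ)^r)) ^ α - (p:ℝ) ^ ((r:ℝ)*α))))

lemma heatKernel_eq (χ : AddChar ℚ_[p] ℂ) (r : ℤ) (α t : ℝ) (x : ℚ_[p]) :
    heatKernel p χ r α t x = ∫ ξ, χ (-(x*ξ)) * ((gker p r α t ξ : ℝ) : ℂ) ∂(μp p) := by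
  unfold heatKernel gker
  congr 1
  funext ξ
  rw [Complex.ofReal_exp, Complex.ofReal_neg]

lemma rpow_zpow (m : ℤ) (α : ℝ) : ((p:ℝ)^m) ^ α = (p:ℝ) ^ ((m:ℝ)*α) := by
  rw [← Real.rpow_intCast (p:ℝ) m, ← Real.rpow_mul (hp0R (p := p)).le]

lemma gker_pos (r : ℤ) (α t : ℝ) (ξ : ℚ_[p]) : 0 < gker p r α t ξ := Real.exp_pos _

lemma gker_eq_C_mul (r : ℤ) (α t : ℝ) (ξ : ℚ_[p]) :
    gker p r α t ξ = Real.exp (t * (p:ℝ)^((r:ℝ)*α))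
      * Real.exp (-(t * (max ‖ξ‖ ((p:ℝ)^r)) ^ α)) := by
  rw [← Real.exp_add]
  unfold gker
  congr 1
  ring

lemma max_congr {r : ℤ} {ξ η : ℚ_[p]} (h : ‖ξ - η‖ ≤ (p:ℝ)^r) :
    max ‖ξ‖ ((p:ℝ)^r) = max ‖η‖ ((p:ℝ)^r) := by
  rcases le_or_gt ‖η‖ ((p:ℝ)^r) with hle|hlt
  · have hξ : ‖ξ‖ ≤ (p:ℝ)^r := by
      have h2 := Padic.nonarchimedean (ξ - η) η
      simp only [sub_add_cancel] at h2
      exact le_trans h2 (max_le h hle)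
    rw [max_eq_right hξ, max_eq_right hle]
  · have hne : ‖ξ - η‖ ≠ ‖η‖ := by intro hc; rw [hc] at h; linarith
    have h2 : ‖ξ‖ = ‖η‖ := by
      have h3 := Padic.add_eq_max_of_ne hne
      simp only [sub_add_cancel] at h3
      rw [h3, max_eq_right (le_of_lt (lt_of_le_of_lt h hlt))]
    rw [h2]

lemma gker_congr {r : ℤ} {α t : ℝ} {ξ η : ℚ_[p]} (h : ‖ξ - η‖ ≤ (p:ℝ)^r) :
    gker p r α t ξ = gker p r α t η := by
  unfold gker; rw [max_congr h]

lemma gker_cont (r : ℤ) {α : ℝ} (hα : 0 < α) (t : ℝ) : Continuous (gker p r α t) := by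
  apply Real.continuous_exp.comp
  apply Continuous.neg
  apply Continuous.mul continuous_const
  apply Continuous.sub ?_ continuous_const
  have h1 : Continuous fun y : ℝ => y ^ α :=
    continuous_iff_continuousAt.2 fun x => Real.continuousAt_rpow_const x α (Or.inr hα.le)
  exact h1.comp (continuous_norm.max continuous_const)

lemma gker_integrable (r : ℤ) {α t : ℝ} (hα : 0 < α) (ht : 0 < t) :
    Integrable (gker p r α t) (μp p) := by
  classical
  refine ⟨(gker_cont r hα t).aestronglyMeasurable, ?_⟩
  set S : ℕ → Set ℚ_[p] :=
    fun k => Nat.casesOn k (Bm p r) (fun j => Bm p (r+j+1) \ Bm p (r+j)) with hS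
  have hSmeas : ∀ k, MeasurableSet (S k) := by
    intro k
    rcases k with _|j
    · exact measurableSet_Bm r
    · exact (measurableSet_Bm _).diff (measurableSet_Bm _)
  have hSsub : ∀ k : ℕ, S k ⊆ Bm p (r + (k:ℤ)) := by
    intro k
    rcases k with _|j
    · simp [hS]
    · refine Set.Subset.trans Set.diff_subset ?_
      intro ξ hξ
      rw [mem_Bm] at hξ ⊢
      convert hξ using 2
      push_cast; ring
  have hcover : (Set.univ : Set ℚ_[p]) ⊆ ⋃ k, S k := by
    intro ξ _
    have hex : ∃ k : ℕ, ‖ξ‖ ≤ (p:ℝ)^(r + (k:ℤ)) := by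
      obtain ⟨k, hk⟩ := pow_unbounded_of_one_lt (‖ξ‖ * (p:ℝ)^(-r:ℤ)) (hp1R (p := p))
      refine ⟨k, ?_⟩
      have h0 : (0:ℝ) < (p:ℝ)^(r:ℤ) := zpow_pos (hp0R (p := p)) r
      have h2 : ‖ξ‖ * (p:ℝ)^(-r:ℤ) * (p:ℝ)^(r:ℤ) ≤ (p:ℝ)^(k:ℕ) * (p:ℝ)^(r:ℤ) :=
        mul_le_mul_of_nonneg_right hk.le h0.le
      calc ‖ξ‖ = ‖ξ‖ * (p:ℝ)^(-r:ℤ) * (p:ℝ)^(r:ℤ) := by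
            rw [mul_assoc, ← zpow_add₀ (ne_of_gt (hp0R (p := p)))]; simp
        _ ≤ (p:ℝ)^(k:ℕ) * (p:ℝ)^(r:ℤ) := h2
        _ = (p:ℝ)^(r + (k:ℤ)) := by
            rw [← zpow_natCast (p:ℝ) k, ← zpow_add₀ (ne_of_gt (hp0R (p := p))), add_comm]
    rcases Nat.eq_zero_or_pos (Nat.find hex) with hk|hk
    · refine Set.mem_iUnion.2 ⟨0, ?_⟩
      have hk0 := Nat.find_spec hex
      rw [hk] at hk0
      simpa [hS, mem_Bm] using hk0
    · obtain ⟨j, hj⟩ := Nat.exists_eq_add_of_lt hk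
      rw [zero_add] at hj
      refine Set.mem_iUnion.2 ⟨j+1, ?_⟩
      have hk0 := Nat.find_spec hex
      rw [hj] at hk0
      have hmin : ¬ ‖ξ‖ ≤ (p:ℝ)^(r + (j:ℤ)) := Nat.find_min hex (by omega)
      show ξ ∈ Bm p (r+j+1) \ Bm p (r+j)
      simp only [Set.mem_diff]
      constructor
      · rw [mem_Bm]
        convert hk0 using 2
        push_cast; ring
      · rw [mem_Bm]
        exact hmin
  -- the dominating sequence
  set u : ℕ → ℝ := fun k => ((p:ℝ)^(r + (k:ℤ) - 1)) ^ α with hu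
  set C : ℝ := Real.exp (t * (p:ℝ)^((r:ℝ)*α)) with hCdef
  set b : ℕ → ℝ := fun k => Real.exp (-(t * u k)) * (p:ℝ)^(r + (k:ℤ)) with hb
  have hbpos : ∀ k, 0 < b k := fun k =>
    mul_pos (Real.exp_pos _) (zpow_pos (hp0R (p := p)) _)
  have hbound : ∀ k : ℕ, ∀ ξ ∈ S k, gker p r α t ξ ≤ C * Real.exp (-(t * u k)) := by
    intro k ξ hξ
    have hM : (p:ℝ)^(r + (k:ℤ) - 1) ≤ max ‖ξ‖ ((p:ℝ)^r) := by
      rcases k with _|j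
      · refine le_trans ?_ (le_max_right _ _)
        apply zpow_le_zpow_right₀ (hp1R (p := p)).le (by omega)
      · refine le_trans ?_ (le_max_left _ _)
        obtain ⟨-, hξ2⟩ := hξ
        rw [mem_Bm] at hξ2
        push_neg at hξ2
        refine le_of_lt (lt_of_le_of_lt (le_of_eq ?_) hξ2)
        congr 1
        push_cast; ring
    have hMα : u k ≤ (max ‖ξ‖ ((p:ℝ)^r)) ^ α :=
      Real.rpow_le_rpow (zpow_nonneg (hp0R (p := p)).le _) hM hα.le
    rw [gker_eq_C_mul]
    apply mul_le_mul_of_nonneg_left _ (Real.exp_pos _).le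
    apply Real.exp_le_exp.2
    nlinarith
  have hu_succ : ∀ k : ℕ, u (k+1) = (p:ℝ)^α * u k := by
    intro k
    show ((p:ℝ)^(r + ((k:ℕ)+1:ℕ) - 1 : ℤ))^α = (p:ℝ)^α * ((p:ℝ)^(r + (k:ℤ) - 1))^α
    have e1 : (r + ((k:ℕ)+1:ℕ) - 1 : ℤ) = (r + (k:ℤ) - 1) + 1 := by push_cast; ring
    rw [e1, zpow_add_one₀ (ne_of_gt (hp0R (p := p))),
      Real.mul_rpow (zpow_nonneg (hp0R (p := p)).le _) (hp0R (p := p)).le]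
    ring
  have hp_succ : ∀ k : ℕ, (p:ℝ)^(r + ((k:ℕ)+1:ℕ) : ℤ) = (p:ℝ)^(r + (k:ℤ)) * (p:ℝ) := by
    intro k
    have e1 : (r + ((k:ℕ)+1:ℕ) : ℤ) = (r + (k:ℤ)) + 1 := by push_cast; ring
    rw [e1, zpow_add_one₀ (ne_of_gt (hp0R (p := p)))]
  have hratio : ∀ k : ℕ, b (k+1) / b k
      = (p:ℝ) * Real.exp (-((t * ((p:ℝ)^α - 1)) * u k)) := by
    intro k
    rw [div_eq_iff (ne_of_gt (hbpos k))]
    show Real.exp (-(t * u (k+1))) * (p:ℝ)^(r + ((k:ℕ)+1:ℕ) : ℤ) = _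
    rw [hu_succ, hp_succ]
    have e2 : -(t * ((p:ℝ)^α * u k)) = (-((t * ((p:ℝ)^α - 1)) * u k)) + (-(t * u k)) := by ring
    rw [e2, Real.exp_add]
    show _ = (p:ℝ) * Real.exp (-((t * ((p:ℝ)^α - 1)) * u k)) * (Real.exp (-(t * u k)) * (p:ℝ)^(r + (k:ℤ)))
    ring
  have hpα : 1 < (p:ℝ)^α := by
    rw [show (1:ℝ) = (1:ℝ)^α by simp]
    exact Real.rpow_lt_rpow (by norm_num) (hp1R (p := p)) hα
  have hu_tendsto : Filter.Tendsto u Filter.atTop Filter.atTop := by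
    apply (tendsto_rpow_atTop hα).comp
    have h1 : (fun k : ℕ => (p:ℝ)^(r + (k:ℤ) - 1)) = fun k : ℕ => (p:ℝ)^(r-1) * (p:ℝ)^(k:ℕ) := by
      funext k
      rw [← zpow_natCast (p:ℝ) k, ← zpow_add₀ (ne_of_gt (hp0R (p := p)))]
      congr 1; ring
    show Filter.Tendsto (fun k : ℕ => (p:ℝ)^(r + (k:ℤ) - 1)) Filter.atTop Filter.atTop
    rw [h1]
    exact Filter.Tendsto.const_mul_atTop (zpow_pos (hp0R (p := p)) (r-1))
      (tendsto_pow_atTop_atTop_of_one_lt (hp1R (p := p)))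
  have hexp_tendsto : Filter.Tendsto
      (fun k : ℕ => (p:ℝ) * Real.exp (-((t * ((p:ℝ)^α - 1)) * u k)))
      Filter.atTop (nhds ((p:ℝ) * 0)) := by
    apply Filter.Tendsto.const_mul
    apply Real.tendsto_exp_atBot.comp
    apply Filter.tendsto_neg_atBot_iff.2
    exact Filter.Tendsto.const_mul_atTop (mul_pos ht (by linarith)) hu_tendsto
  have hsum : Summable b := by
    apply summable_of_ratio_test_tendsto_lt_one zero_lt_one
      (Filter.Eventually.of_forall fun k => (hbpos k).ne')
    have h1 : (fun k : ℕ => ‖b (k+1)‖ / ‖b k‖)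
        = fun k : ℕ => (p:ℝ) * Real.exp (-((t * ((p:ℝ)^α - 1)) * u k)) := by
      funext k
      rw [Real.norm_eq_abs, Real.norm_eq_abs, abs_of_pos (hbpos _), abs_of_pos (hbpos _), hratio]
    rw [h1]
    simpa using hexp_tendsto
  rw [hasFiniteIntegral_iff_norm]
  have hchain : ∫⁻ ξ, ENNReal.ofReal ‖gker p r α t ξ‖ ∂(μp p)
      ≤ ∑' k, ENNReal.ofReal (C * b k) := by
    calc ∫⁻ ξ, ENNReal.ofReal ‖gker p r α t ξ‖ ∂(μp p)
        = ∫⁻ ξ in Set.univ, ENNReal.ofReal ‖gker p r α t ξ‖ ∂(μp p) :=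
          (setLIntegral_univ _).symm
      _ ≤ ∫⁻ ξ in ⋃ k, S k, ENNReal.ofReal ‖gker p r α t ξ‖ ∂(μp p) :=
          lintegral_mono_set hcover
      _ ≤ ∑' k, ∫⁻ ξ in S k, ENNReal.ofReal ‖gker p r α t ξ‖ ∂(μp p) :=
          lintegral_iUnion_le _ _
      _ ≤ ∑' k, ENNReal.ofReal (C * b k) := by
          apply ENNReal.tsum_le_tsum
          intro k
          calc ∫⁻ ξ in S k, ENNReal.ofReal ‖gker p r α t ξ‖ ∂(μp p)
              ≤ ∫⁻ _ in S k, ENNReal.ofReal (C * Real.exp (-(t * u k))) ∂(μp p) := by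
                apply setLIntegral_mono' (hSmeas k)
                intro ξ hξ
                apply ENNReal.ofReal_le_ofReal
                rw [Real.norm_eq_abs, abs_of_pos (gker_pos r α t ξ)]
                exact hbound k ξ hξ
            _ = ENNReal.ofReal (C * Real.exp (-(t * u k))) * μp p (S k) :=
                setLIntegral_const _ _
            _ ≤ ENNReal.ofReal (C * Real.exp (-(t * u k))) * ENNReal.ofReal ((p:ℝ)^(r + (k:ℤ))) := by
                apply mul_le_mul_right
                rw [← vol_Bm]
                exact measure_mono (hSsub k)
            _ = ENNReal.ofReal (C * b k) := by
                rw [← ENNReal.ofReal_mul (by positivity)]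
                rw [hb]
                ring_nf
  apply lt_of_le_of_lt hchain
  have h2 : Summable (fun k => C * b k) := hsum.mul_left C
  rw [← ENNReal.ofReal_tsum_of_nonneg (fun k => by positivity) h2]
  exact ENNReal.ofReal_lt_top

lemma norm_coe_gker (r : ℤ) (α t : ℝ) (ξ : ℚ_[p]) :
    ‖((gker p r α t ξ : ℝ) : ℂ)‖ = gker p r α t ξ := by
  rw [Complex.norm_real, Real.norm_eq_abs, abs_of_pos (gker_pos r α t ξ)]

lemma heatKernel_cont (hχ : ∀ y : ℚ_[p], χ y = 1 ↔ ‖y‖ ≤ 1) (r : ℤ) {α t : ℝ}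
    (hα : 0 < α) (ht : 0 < t) : Continuous (heatKernel p χ r α t) := by
  have h1 : (heatKernel p χ r α t)
      = fun x => ∫ ξ, χ (-(x*ξ)) * ((gker p r α t ξ : ℝ) : ℂ) ∂(μp p) :=
    funext (heatKernel_eq χ r α t)
  rw [h1]
  apply continuous_of_dominated (bound := gker p r α t)
  · intro x
    apply Continuous.aestronglyMeasurable
    have hc1 : Continuous fun a : ℚ_[p] => -(x * a) := by continuity
    exact ((char_cont hχ).comp hc1).mul (Complex.continuous_ofReal.comp (gker_cont r hα t))
  · intro x
    apply Filter.Eventually.of_forall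
    intro ξ
    rw [norm_mul, char_norm hχ, one_mul, norm_coe_gker]
  · exact gker_integrable r hα ht
  · apply Filter.Eventually.of_forall
    intro ξ
    have hc1 : Continuous fun a : ℚ_[p] => -(a * ξ) := by continuity
    exact ((char_cont hχ).comp hc1).mul continuous_const

lemma heatKernel_zero (hχ : ∀ y : ℚ_[p], χ y = 1 ↔ ‖y‖ ≤ 1) (r : ℤ) {α t : ℝ}
    (x : ℚ_[p]) (hx : (p:ℝ)^(-r) < ‖x‖) : heatKernel p χ r α t x = 0 := by
  set u : ℚ_[p] := (p:ℚ_[p])^(-r) with hu_def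
  have hu : ‖u‖ = (p:ℝ)^r := by rw [hu_def, norm_zpow_p, neg_neg]
  have hcne : χ (-(x*u)) ≠ 1 := by
    intro hc
    have h6 := (hχ _).1 hc
    rw [norm_neg, norm_mul, hu] at h6
    have h7 : (p:ℝ)^(-r) * (p:ℝ)^r = 1 := by
      rw [← zpow_add₀ (ne_of_gt (hp0R (p := p)))]; simp
    nlinarith [zpow_pos (hp0R (p := p)) r, zpow_pos (hp0R (p := p)) (-r)]
  have key : heatKernel p χ r α t x = χ (-(x*u)) * heatKernel p χ r α t x := by
    rw [heatKernel_eq]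
    conv_lhs => rw [← integral_add_right_eq_self
      (fun ξ => χ (-(x*ξ)) * ((gker p r α t ξ : ℝ) : ℂ)) u]
    rw [← integral_const_mul]
    congr 1
    funext ξ
    rw [show -(x*(ξ+u)) = -(x*ξ) + -(x*u) by ring, AddChar.map_add_eq_mul,
      gker_congr (show ‖(ξ+u) - ξ‖ ≤ (p:ℝ)^r by rw [add_sub_cancel_left]; exact le_of_eq hu)]
    ring
  have h0 : (1 - χ (-(x*u))) * heatKernel p χ r α t x = 0 := by
    linear_combination key
  rcases mul_eq_zero.1 h0 with h|h
  · exact absurd (sub_eq_zero.1 h).symm hcne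
  · exact h

lemma heatKernel_integrable (hχ : ∀ y : ℚ_[p], χ y = 1 ↔ ‖y‖ ≤ 1) (r : ℤ) {α t : ℝ}
    (hα : 0 < α) (ht : 0 < t) : Integrable (heatKernel p χ r α t) (μp p) := by
  apply (heatKernel_cont hχ r hα ht).integrable_of_hasCompactSupport
  apply HasCompactSupport.intro (isCompact_closedBall (0:ℚ_[p]) ((p:ℝ)^(-r)))
  intro x hx
  apply heatKernel_zero hχ r x
  simp only [Metric.mem_closedBall, dist_zero_right, not_le] at hx
  exact hx

lemma heatKernel_fourier (hχ : ∀ y : ℚ_[p], χ y = 1 ↔ ‖y‖ ≤ 1) (r : ℤ) {α t : ℝ}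
    (hα : 0 < α) (ht : 0 < t) (η : ℚ_[p]) :
    ∫ z, χ (z*η) * heatKernel p χ r α t z ∂(μp p) = ((gker p r α t η : ℝ) : ℂ) := by
  classical
  haveI : IsFiniteMeasure ((μp p).restrict (Bm p (-r))) :=
    ⟨by rw [Measure.restrict_apply_univ]
        exact IsCompact.measure_lt_top (isCompact_closedBall (0:ℚ_[p]) _)⟩
  have hrestrict : ∫ z, χ (z*η) * heatKernel p χ r α t z ∂(μp p)
      = ∫ z in Bm p (-r), χ (z*η) * heatKernel p χ r α t z ∂(μp p) := by
    symm
    apply setIntegral_eq_integral_of_forall_compl_eq_zero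
    intro z hz
    rw [mem_Bm, not_le] at hz
    rw [heatKernel_zero hχ r z hz, mul_zero]
  rw [hrestrict]
  have h2 : Set.EqOn (fun z => χ (z*η) * heatKernel p χ r α t z)
      (fun z => ∫ ξ, χ (z*η) * (χ (-(z*ξ)) * ((gker p r α t ξ : ℝ) : ℂ)) ∂(μp p))
      (Bm p (-r)) := by
    intro z _
    show χ (z*η) * heatKernel p χ r α t z = _
    rw [heatKernel_eq, ← integral_const_mul]
  rw [setIntegral_congr_fun (measurableSet_Bm _) h2]
  have hint : Integrable (Function.uncurry fun z ξ =>
      χ (z*η) * (χ (-(z*ξ)) * ((gker p r α t ξ : ℝ) : ℂ)))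
      (((μp p).restrict (Bm p (-r))).prod (μp p)) := by
    apply Integrable.mono' (g := fun q => (1:ℝ) * gker p r α t q.2)
    · exact Integrable.mul_prod (integrable_const (1:ℝ)) (gker_integrable r hα ht)
    · apply Continuous.aestronglyMeasurable
      exact ((char_cont hχ).comp (continuous_fst.mul continuous_const)).mul
        (((char_cont hχ).comp ((continuous_fst.mul continuous_snd).neg)).mul
          (Complex.continuous_ofReal.comp ((gker_cont r hα t).comp continuous_snd)))
    · apply Filter.Eventually.of_forall
      rintro ⟨z, ξ⟩
      show ‖χ (z*η) * (χ (-(z*ξ)) * _)‖ ≤ _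
      rw [norm_mul, norm_mul, char_norm hχ, char_norm hχ, one_mul, one_mul, norm_coe_gker,
        one_mul]
  rw [integral_integral_swap hint]
  have h3 : ∀ ξ : ℚ_[p], (∫ z in Bm p (-r), χ (z*η) * (χ (-(z*ξ)) * ((gker p r α t ξ : ℝ) : ℂ))
      ∂(μp p)) = ((gker p r α t ξ : ℝ) : ℂ)
        * ∫ z in Bm p (-r), χ (-((ξ - η)*z)) ∂(μp p) := by
    intro ξ
    rw [← integral_const_mul]
    apply setIntegral_congr_fun (measurableSet_Bm _)
    intro z _
    show χ (z*η) * (χ (-(z*ξ)) * _) = _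
    rw [← mul_assoc, ← AddChar.map_add_eq_mul, show z*η + -(z*ξ) = -((ξ - η)*z) by ring]
    ring
  simp_rw [h3, char_ball hχ _ (-r), neg_neg]
  have h4 : (fun ξ => ((gker p r α t ξ : ℝ) : ℂ)
        * if ‖ξ - η‖ ≤ (p:ℝ)^r then (((p:ℝ)^(-r) : ℝ) : ℂ) else 0)
      = Set.indicator (Metric.closedBall η ((p:ℝ)^r))
        (fun ξ => ((gker p r α t ξ : ℝ) : ℂ) * (((p:ℝ)^(-r) : ℝ) : ℂ)) := by
    funext ξ
    rw [Set.indicator_apply]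
    by_cases hc : ‖ξ - η‖ ≤ (p:ℝ)^r
    · rw [if_pos hc, if_pos (by rwa [Metric.mem_closedBall, dist_eq_norm])]
    · rw [if_neg hc, if_neg (by rwa [Metric.mem_closedBall, dist_eq_norm]), mul_zero]
  rw [h4, integral_indicator measurableSet_closedBall]
  rw [setIntegral_congr_fun measurableSet_closedBall
    (g := fun _ => ((gker p r α t η : ℝ) : ℂ) * (((p:ℝ)^(-r) : ℝ) : ℂ)) ?_]
  · rw [setIntegral_const, measureReal_def, vol_ball_translate, vol_Bm_real, Complex.real_smul]
    have hone : (Complex.ofReal ((p:ℝ)^(r:ℤ))) * (Complex.ofReal ((p:ℝ)^(-r:ℤ))) = 1 := by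
      rw [← Complex.ofReal_mul, ← zpow_add₀ (ne_of_gt (hp0R (p := p)))]
      simp
    linear_combination (Complex.ofReal (gker p r α t η)) * hone
  · intro ξ hξ
    rw [Metric.mem_closedBall, dist_eq_norm] at hξ
    beta_reduce
    rw [gker_congr hξ]

end Stmt4

open Stmt4

theorem stmt4 (χ : AddChar ℚ_[p] ℂ) (hχ : ∀ y : ℚ_[p], χ y = 1 ↔ ‖y‖ ≤ 1) (r : ℤ) (α t t' : ℝ) (hα : 0 < α) (ht : 0 < t) (ht' : 0 < t')
    (x : ℚ_[p]) :
    (∫ y, heatKernel p χ r α t (x-y) * heatKernel p χ r α t' y ∂(μp p))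
      = heatKernel p χ r α (t+t') x := by
  classical
  have hZt : Integrable (heatKernel p χ r α t) (μp p) := heatKernel_integrable hχ r hα ht
  calc (∫ y, heatKernel p χ r α t (x-y) * heatKernel p χ r α t' y ∂(μp p))
      = ∫ y, ∫ ξ, heatKernel p χ r α t (x-y) * (χ (-(y*ξ)) * ((gker p r α t' ξ : ℝ) : ℂ))
          ∂(μp p) ∂(μp p) := by
        congr 1; funext y
        rw [heatKernel_eq χ r α t' y]
        exact (integral_const_mul _ _).symm
    _ = ∫ ξ, ∫ y, heatKernel p χ r α t (x-y) * (χ (-(y*ξ)) * ((gker p r α t' ξ : ℝ) : ℂ))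
          ∂(μp p) ∂(μp p) := by
        apply integral_integral_swap
        apply Integrable.mono'
          (g := fun q : ℚ_[p] × ℚ_[p] => ‖heatKernel p χ r α t (x - q.1)‖ * gker p r α t' q.2)
        · exact Integrable.mul_prod ((hZt.comp_sub_left x).norm) (gker_integrable r hα ht')
        · apply Continuous.aestronglyMeasurable
          exact (((heatKernel_cont hχ r hα ht).comp (continuous_const.sub continuous_fst)).mul
            (((char_cont hχ).comp ((continuous_fst.mul continuous_snd).neg)).mul
              (Complex.continuous_ofReal.comp ((gker_cont r hα t').comp continuous_snd))))
        · apply Filter.Eventually.of_forall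
          rintro ⟨y, ξ⟩
          show ‖heatKernel p χ r α t (x-y) * (χ (-(y*ξ)) * ((gker p r α t' ξ : ℝ) : ℂ))‖ ≤ _
          rw [norm_mul, norm_mul, char_norm hχ, one_mul, norm_coe_gker]
    _ = ∫ ξ, χ (-(x*ξ)) * (((gker p r α t ξ : ℝ) : ℂ) * ((gker p r α t' ξ : ℝ) : ℂ)) ∂(μp p) := by
        congr 1; funext ξ
        have e1 : ∀ y, heatKernel p χ r α t (x-y) * (χ (-(y*ξ)) * ((gker p r α t' ξ : ℝ) : ℂ))
            = ((gker p r α t' ξ : ℝ) : ℂ) * (heatKernel p χ r α t (x-y) * χ (-(y*ξ))) := by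
          intro y; ring
        simp_rw [e1]
        rw [integral_const_mul]
        have e2 : ∀ y, heatKernel p χ r α t (x-y) * χ (-(y*ξ))
            = (fun z => heatKernel p χ r α t z * χ (-((x-z)*ξ))) (x - y) := by
          intro y
          show _ = heatKernel p χ r α t (x-y) * χ (-((x-(x-y))*ξ))
          rw [sub_sub_cancel]
        simp_rw [e2]
        rw [integral_sub_left_eq_self (fun z => heatKernel p χ r α t z * χ (-((x-z)*ξ))) (μp p) x]
        have e3 : ∀ z, heatKernel p χ r α t z * χ (-((x-z)*ξ))
            = χ (-(x*ξ)) * (χ (z*ξ) * heatKernel p χ r α t z) := by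
          intro z
          rw [show -((x-z)*ξ) = -(x*ξ) + z*ξ by ring, AddChar.map_add_eq_mul]
          ring
        simp_rw [e3]
        rw [integral_const_mul, heatKernel_fourier hχ r hα ht ξ]
        ring
    _ = heatKernel p χ r α (t+t') x := by
        rw [heatKernel_eq]
        congr 1; funext ξ
        congr 1
        rw [← Complex.ofReal_mul]
        congr 1
        unfold gker
        rw [← Real.exp_add]
        congr 1
        ring

end
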